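/- For every h ∈ ℂ with Re(h) > 1, every n ∈ ℕ with n ≥ 1, and every m ∈ ℕ with m ≥ 1, one has the difference equation q^{(h−1)n} · β_{m,q}^h(n) − β_{m,q}^h = m · Σ_{l=0}^{n−1} q^{hl}·[l]_q^{m−1} − (h−1)(1−q) · Σ_{l=0}^{n−1} q^{(h−1)l}·[l]_q^{m}, where in the l = 0 term the convention [0]_q^{0} = 1 is used. -/

import Mathlib

open Complex Finset Filter

/-- Complex power `q^z := exp(z·log q)` for a real base `q`. -/
noncomputable def qcpow (q : ℝ) (z : ℂ) : ℂ := Complex.exp (z * (Real.log q : ℂ))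

/-- The complex `q`-number `[z]_q = (1 - q^z)/(1 - q)`. -/
noncomputable def qnum (q : ℝ) (z : ℂ) : ℂ := (1 - qcpow q z) / (1 - (q : ℂ))

/-- The real `q`-number `[y]_q = (1 - q^y)/(1 - q)` for real `y`. -/
noncomputable def qnumR (q : ℝ) (y : ℝ) : ℝ := (1 - Real.exp (y * Real.log q)) / (1 - q)

/-- The `(h,q)`-Bernoulli polynomial
`β_{n,q}^h(x) = (1-q)^{-n} ∑_{l=0}^{n} C(n,l) (-1)^l q^{lx} (l+h-1)/[l+h-1]_q`. -/
noncomputable def qbeta (q : ℝ) (h : ℂ) (n : ℕ) (x : ℝ) : ℂ :=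
  (1 - (q : ℂ))⁻¹ ^ n * ∑ l ∈ Finset.range (n + 1),
    (n.choose l : ℂ) * (-1) ^ l * qcpow q ((l : ℂ) * (x : ℂ)) *
      (((l : ℂ) + h - 1) / qnum q ((l : ℂ) + h - 1))

lemma qcpow_add (q : ℝ) (a b : ℂ) : qcpow q (a + b) = qcpow q a * qcpow q b := by
  simp [qcpow, add_mul, Complex.exp_add]

lemma qcpow_zero (q : ℝ) : qcpow q 0 = 1 := by simp [qcpow]

lemma qcpow_nat_mul (q : ℝ) (l : ℕ) (z : ℂ) : qcpow q ((l : ℂ) * z) = (qcpow q z) ^ l := by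
  simp [qcpow, mul_assoc, Complex.exp_nat_mul]

lemma qcpow_ofReal (q : ℝ) (y : ℝ) : qcpow q (y : ℂ) = ((Real.exp (y * Real.log q) : ℝ) : ℂ) := by
  rw [qcpow, Complex.ofReal_exp]; push_cast; ring_nf

lemma qcpow_ne_one (q : ℝ) (hq0 : 0 < q) (hq1 : q < 1) (z : ℂ) (hz : 0 < z.re) :
    qcpow q z ≠ 1 := by
  have habs : ‖qcpow q z‖ < 1 := by
    rw [qcpow, Complex.norm_exp]
    have hlog : Real.log q < 0 := Real.log_neg hq0 hq1
    have h1 : (z * (Real.log q : ℂ)).re = z.re * Real.log q := by simp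
    rw [h1]
    have h2 : z.re * Real.log q < 0 := mul_neg_of_pos_of_neg hz hlog
    calc Real.exp (z.re * Real.log q) < Real.exp 0 := Real.exp_lt_exp.2 h2
      _ = 1 := Real.exp_zero
  intro hcon
  rw [hcon] at habs; simp at habs

lemma sumB1 (y : ℂ) (m : ℕ) :
    ∑ l ∈ Finset.range (m + 1), (m.choose l : ℂ) * (-1) ^ l * y ^ l = (1 - y) ^ m := by
  have := add_pow (-y) 1 m
  simp only [one_pow, mul_one] at this
  rw [show (1 : ℂ) - y = -y + 1 by ring, this]
  refine Finset.sum_congr rfl fun l _ => ?_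
  rw [neg_pow]; ring

lemma sumB2 (y : ℂ) (m' : ℕ) :
    ∑ l ∈ Finset.range (m' + 1 + 1), (l : ℂ) * ((m' + 1).choose l : ℂ) * (-1) ^ l * y ^ l
      = -((m' : ℂ) + 1) * y * (1 - y) ^ m' := by
  rw [Finset.sum_range_succ']
  simp only [Nat.cast_zero, zero_mul, pow_zero, mul_one, add_zero]
  have : ∀ j ∈ Finset.range (m' + 1),
      ((j : ℂ) + 1) * ((m' + 1).choose (j + 1) : ℂ) * (-1) ^ (j + 1) * y ^ (j + 1)
        = (-((m' : ℂ) + 1) * y) * ((m'.choose j : ℂ) * (-1) ^ j * y ^ j) := by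
    intro j _
    have hnat : (m' + 1) * m'.choose j = (m' + 1).choose (j + 1) * (j + 1) :=
      Nat.add_one_mul_choose_eq m' j
    have hc : ((m' : ℂ) + 1) * (m'.choose j : ℂ) = ((m' + 1).choose (j + 1) : ℂ) * ((j : ℂ) + 1) := by
      exact_mod_cast congrArg (Nat.cast : ℕ → ℂ) hnat
    linear_combination ((-1:ℂ)) ^ j * y ^ (j + 1) * hc
  push_cast
  rw [Finset.sum_congr rfl this, ← Finset.mul_sum, sumB1]

lemma qbeta_step (q : ℝ) (hq0 : 0 < q) (hq1 : q < 1) (h : ℂ) (hh : 1 < h.re)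
    (m : ℕ) (hm : 1 ≤ m) (x : ℝ) :
    qcpow q (h - 1) * qbeta q h m (x + 1) - qbeta q h m x
      = (m : ℂ) * qcpow q (x : ℂ) * ((qnumR q x : ℂ) ^ (m - 1)) -
        (h - 1) * (1 - (q : ℂ)) * ((qnumR q x : ℂ) ^ m) := by
  obtain ⟨m', rfl⟩ : ∃ m', m = m' + 1 := ⟨m - 1, (Nat.succ_pred_eq_of_pos hm).symm⟩
  have hqne : (1 : ℂ) - (q : ℂ) ≠ 0 := by
    rw [sub_ne_zero]
    exact_mod_cast (ne_of_lt hq1).symm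
  set y : ℂ := qcpow q (x : ℂ) with hy
  have hyval : ((qnumR q x : ℝ) : ℂ) = (1 - y) / (1 - (q : ℂ)) := by
    rw [qnumR, hy, qcpow_ofReal]; push_cast; ring
  have key : ∀ l ∈ Finset.range (m' + 1 + 1),
      qcpow q (h - 1) * (((m' + 1).choose l : ℂ) * (-1) ^ l * qcpow q ((l : ℂ) * ((x + 1 : ℝ) : ℂ)) *
          (((l : ℂ) + h - 1) / qnum q ((l : ℂ) + h - 1)))
        - ((m' + 1).choose l : ℂ) * (-1) ^ l * qcpow q ((l : ℂ) * (x : ℂ)) *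
          (((l : ℂ) + h - 1) / qnum q ((l : ℂ) + h - 1))
      = -(1 - (q : ℂ)) * (((m' + 1).choose l : ℂ) * (-1) ^ l * y ^ l * ((l : ℂ) + h - 1)) := by
    intro l _
    have hre : 0 < ((l : ℂ) + h - 1).re := by
      simp only [Complex.sub_re, Complex.add_re, Complex.natCast_re, Complex.one_re]
      have : (0 : ℝ) ≤ (l : ℝ) := Nat.cast_nonneg l
      linarith
    have h1 : qcpow q ((l : ℂ) + h - 1) ≠ 1 := qcpow_ne_one q hq0 hq1 _ hre
    have hnum : qnum q ((l : ℂ) + h - 1) ≠ 0 :=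
      div_ne_zero (sub_ne_zero.mpr (Ne.symm h1)) hqne
    have e1 : qcpow q (h - 1) * qcpow q ((l : ℂ) * ((x + 1 : ℝ) : ℂ))
        = qcpow q ((l : ℂ) * (x : ℂ)) * qcpow q ((l : ℂ) + h - 1) := by
      rw [← qcpow_add, ← qcpow_add]; congr 1; push_cast; ring
    have e2 : qcpow q ((l : ℂ) * (x : ℂ)) = y ^ l := qcpow_nat_mul q l _
    have e3 : (((l : ℂ) + h - 1) / qnum q ((l : ℂ) + h - 1)) * (qcpow q ((l : ℂ) + h - 1) - 1)
        = -((l : ℂ) + h - 1) * (1 - (q : ℂ)) := by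
      have hE : (1 : ℂ) - qcpow q ((l : ℂ) + h - 1) ≠ 0 := sub_ne_zero.mpr (Ne.symm h1)
      rw [qnum, div_div_eq_mul_div]
      field_simp
      ring
    linear_combination (((m' + 1).choose l : ℂ) * (-1) ^ l *
        (((l : ℂ) + h - 1) / qnum q ((l : ℂ) + h - 1))) * e1
      + (((m' + 1).choose l : ℂ) * (-1) ^ l * qcpow q ((l : ℂ) * (x : ℂ))) * e3
      - (((m' + 1).choose l : ℂ) * (-1) ^ l * ((l : ℂ) + h - 1) * (1 - (q : ℂ))) * e2
  have hsum : qcpow q (h - 1) * qbeta q h (m' + 1) (x + 1) - qbeta q h (m' + 1) x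
      = (1 - (q : ℂ))⁻¹ ^ (m' + 1) * ∑ l ∈ Finset.range (m' + 1 + 1),
          (-(1 - (q : ℂ)) * (((m' + 1).choose l : ℂ) * (-1) ^ l * y ^ l * ((l : ℂ) + h - 1))) := by
    rw [qbeta, qbeta, mul_left_comm, ← mul_sub, Finset.mul_sum, ← Finset.sum_sub_distrib]
    congr 1
    exact Finset.sum_congr rfl key
  have hsplit : ∑ l ∈ Finset.range (m' + 1 + 1),
      (((m' + 1).choose l : ℂ) * (-1) ^ l * y ^ l * ((l : ℂ) + h - 1))
      = -((m' : ℂ) + 1) * y * (1 - y) ^ m' + (h - 1) * (1 - y) ^ (m' + 1) := by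
    calc ∑ l ∈ Finset.range (m' + 1 + 1),
        (((m' + 1).choose l : ℂ) * (-1) ^ l * y ^ l * ((l : ℂ) + h - 1))
        = ∑ l ∈ Finset.range (m' + 1 + 1),
            ((l : ℂ) * ((m' + 1).choose l : ℂ) * (-1) ^ l * y ^ l
              + (h - 1) * (((m' + 1).choose l : ℂ) * (-1) ^ l * y ^ l)) :=
          Finset.sum_congr rfl fun l _ => by ring
      _ = -((m' : ℂ) + 1) * y * (1 - y) ^ m' + (h - 1) * (1 - y) ^ (m' + 1) := by
          rw [Finset.sum_add_distrib, sumB2, ← Finset.mul_sum, sumB1]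
  rw [hsum]
  have : ∑ l ∈ Finset.range (m' + 1 + 1),
      (-(1 - (q : ℂ)) * (((m' + 1).choose l : ℂ) * (-1) ^ l * y ^ l * ((l : ℂ) + h - 1)))
      = -(1 - (q : ℂ)) * (-((m' : ℂ) + 1) * y * (1 - y) ^ m' + (h - 1) * (1 - y) ^ (m' + 1)) := by
    rw [← Finset.mul_sum, hsplit]
  rw [this, hyval]
  simp only [Nat.add_sub_cancel]
  push_cast
  rw [div_pow, div_pow, inv_pow]
  field_simp
  ring

/-- the difference equation for `(h,q)`-Bernoulli polynomials
(with the convention `[0]_q^0 = 1`). -/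
theorem qbeta_difference_equation (q : ℝ) (hq0 : 0 < q) (hq1 : q < 1)
    (h : ℂ) (hh : 1 < h.re) (n : ℕ) (hn : 1 ≤ n) (m : ℕ) (hm : 1 ≤ m) :
    qcpow q ((h - 1) * (n : ℂ)) * qbeta q h m (n : ℝ) - qbeta q h m 0 =
      (m : ℂ) * ∑ l ∈ Finset.range n, qcpow q (h * (l : ℂ)) * ((qnumR q (l : ℝ) : ℂ) ^ (m - 1)) -
      (h - 1) * (1 - (q : ℂ)) *
        ∑ l ∈ Finset.range n, qcpow q ((h - 1) * (l : ℂ)) * ((qnumR q (l : ℝ) : ℂ) ^ m) := by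
  clear hn
  induction n with
  | zero => simp [qcpow_zero]
  | succ n ih =>
    rw [Finset.sum_range_succ, Finset.sum_range_succ]
    have hstep := qbeta_step q hq0 hq1 h hh m hm (n : ℝ)
    push_cast at hstep
    have hc1 : qcpow q ((h - 1) * ((n + 1 : ℕ) : ℂ))
        = qcpow q ((h - 1) * (n : ℂ)) * qcpow q (h - 1) := by
      rw [← qcpow_add]; congr 1; push_cast; ring
    have hc2 : qcpow q (h * ((n : ℕ) : ℂ))
        = qcpow q ((h - 1) * (n : ℂ)) * qcpow q ((n : ℕ) : ℂ) := by
      rw [← qcpow_add]; congr 1; ring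
    rw [show ((n + 1 : ℕ) : ℝ) = (n : ℝ) + 1 by push_cast; ring]
    linear_combination ih + qcpow q ((h - 1) * (n : ℂ)) * hstep
      + qbeta q h m ((n : ℝ) + 1) * hc1
      - (m : ℂ) * ((qnumR q (n : ℝ) : ℂ) ^ (m - 1)) * hc2
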